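/- Let F be a field of prime characteristic q, let n ≥ 2, let y ∈ F with y ≠ 0, and let x ∈ {1, -1} ⊆ F. Then the multiplicative order of the n×n Zhang–Liu matrix Q(y,x) equals q: Q(y,x)^q = I and Q(y,x)^k ≠ I for all 1 ≤ k < q. -/

import Mathlib

open Matrix Finset

/-- Generalized Pascal matrix of the first kind: with 1-based indexing the (i,j) entry is
`y^(j-i) * binom(j-1, i-1)` for `j ≥ i` and `0` otherwise. Here indices are 0-based. -/
def pascal1 {R : Type*} [CommRing R] (n : ℕ) (y : R) : Matrix (Fin n) (Fin n) R :=
  Matrix.of fun i j => if i ≤ j then y ^ (j.val - i.val) * (Nat.choose j.val i.val : R) else 0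

/-- Zhang–Liu matrix: with 1-based indexing the (i,j) entry is
`y^(j-i) * x^(i+j-2) * binom(j-1, i-1)` for `j ≥ i` and `0` otherwise. Indices 0-based here. -/
def zhangLiu {R : Type*} [CommRing R] (n : ℕ) (y x : R) : Matrix (Fin n) (Fin n) R :=
  Matrix.of fun i j =>
    if i ≤ j then y ^ (j.val - i.val) * x ^ (i.val + j.val) * (Nat.choose j.val i.val : R) else 0

/-- `D(α)` : the diagonal matrix with (i,i) entry `α^(i-1)` (1-based), i.e. `α^i` 0-based. -/
def diagD {R : Type*} [CommRing R] (n : ℕ) (α : R) : Matrix (Fin n) (Fin n) R :=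
  Matrix.diagonal fun i : Fin n => α ^ i.val

lemma pascal1_mul {R : Type*} [CommRing R] (n : ℕ) (y z : R) :
    pascal1 n y * pascal1 n z = pascal1 n (y + z) := by
  ext i j
  simp only [Matrix.mul_apply, pascal1, Matrix.of_apply, ite_zero_mul_ite_zero]
  have key : ∀ m : Fin n,
      (if i ≤ m ∧ m ≤ j then
        (y ^ (m.val - i.val) * (Nat.choose m.val i.val : R)) *
          (z ^ (j.val - m.val) * (Nat.choose j.val m.val : R)) else 0)
      = (fun t : ℕ => if i.val ≤ t ∧ t ≤ j.val then
        (y ^ (t - i.val) * (Nat.choose t i.val : R)) *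
          (z ^ (j.val - t) * (Nat.choose j.val t : R)) else 0) m.val := by
    intro m; simp only [Fin.le_def]
  rw [Finset.sum_congr rfl (fun m _ => key m),
    Fin.sum_univ_eq_sum_range (fun t : ℕ => if i.val ≤ t ∧ t ≤ j.val then
        (y ^ (t - i.val) * (Nat.choose t i.val : R)) *
          (z ^ (j.val - t) * (Nat.choose j.val t : R)) else 0) n]
  by_cases hij : i ≤ j
  · rw [if_pos hij]
    have hij' : i.val ≤ j.val := hij
    have hsub : ∀ t ∈ Finset.range n,
        (if i.val ≤ t ∧ t ≤ j.val then
          (y ^ (t - i.val) * (Nat.choose t i.val : R)) *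
            (z ^ (j.val - t) * (Nat.choose j.val t : R)) else 0)
        = (if t ∈ Finset.Ico i.val (j.val + 1) then
          (y ^ (t - i.val) * (Nat.choose t i.val : R)) *
            (z ^ (j.val - t) * (Nat.choose j.val t : R)) else 0) := by
      intro t _; congr 1; simp [Finset.mem_Ico]
    rw [Finset.sum_congr rfl hsub, Finset.sum_ite_mem, Finset.inter_eq_right.2 ?ss]
    case ss =>
      intro t ht
      simp only [Finset.mem_Ico] at ht
      simp only [Finset.mem_range]
      omega
    rw [Finset.sum_Ico_eq_sum_range]
    have hd : j.val + 1 - i.val = (j.val - i.val) + 1 := by omega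
    rw [hd]
    set d := j.val - i.val with hdd
    have hj : j.val = i.val + d := by omega
    rw [add_pow]
    rw [Finset.sum_mul]
    apply Finset.sum_congr rfl
    intro t ht
    simp only [Finset.mem_range] at ht
    have ht' : t ≤ d := by omega
    have hc : (Nat.choose j.val (i.val + t) : R) * (Nat.choose (i.val + t) i.val : R)
        = (Nat.choose j.val i.val : R) * (Nat.choose d t : R) := by
      rw [← Nat.cast_mul, ← Nat.cast_mul]
      congr 1
      have := Nat.choose_mul (n := j.val) (k := i.val + t) (s := i.val)
        (by omega)
      rw [this]
      congr 2 <;> omega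
    have e1 : i.val + t - i.val = t := by omega
    have e2 : j.val - (i.val + t) = d - t := by omega
    rw [e1, e2]
    calc y ^ t * (Nat.choose (i.val + t) i.val : R) *
          (z ^ (d - t) * (Nat.choose j.val (i.val + t) : R))
        = ((Nat.choose j.val (i.val + t) : R) * (Nat.choose (i.val + t) i.val : R)) *
          (y ^ t * z ^ (d - t)) := by ring
      _ = ((Nat.choose j.val i.val : R) * (Nat.choose d t : R)) * (y ^ t * z ^ (d - t)) := by
          rw [hc]
      _ = y ^ t * z ^ (d - t) * (Nat.choose d t : R) * (Nat.choose j.val i.val : R) := by ring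
  · rw [if_neg hij]
    apply Finset.sum_eq_zero
    intro t _
    rw [if_neg]
    rintro ⟨h1, h2⟩
    exact hij (Fin.le_def.2 (le_trans h1 h2))

lemma pascal1_zero {R : Type*} [CommRing R] (n : ℕ) : pascal1 n (0 : R) = 1 := by
  ext i j
  simp only [pascal1, Matrix.of_apply, Matrix.one_apply]
  by_cases h : i = j
  · subst h; simp
  · by_cases hle : i ≤ j
    · have : 0 < j.val - i.val := by
        have := Fin.le_def.1 hle
        have hne : i.val ≠ j.val := fun hv => h (Fin.ext hv)
        omega
      rw [if_pos hle, if_neg h, zero_pow (by omega), zero_mul]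
    · rw [if_neg hle, if_neg h]

lemma pascal1_pow {R : Type*} [CommRing R] (n : ℕ) (y : R) (k : ℕ) :
    pascal1 n y ^ k = pascal1 n ((k : R) * y) := by
  induction k with
  | zero => simp [pascal1_zero]
  | succ k ih =>
    rw [pow_succ, ih, pascal1_mul]
    congr 1
    push_cast
    ring

lemma zhangLiu_eq {R : Type*} [CommRing R] (n : ℕ) (y x : R) :
    zhangLiu n y x = diagD n x * pascal1 n y * diagD n x := by
  ext i j
  simp only [zhangLiu, diagD, pascal1, Matrix.diagonal_mul, Matrix.mul_diagonal,
    Matrix.of_apply]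
  by_cases h : i ≤ j
  · rw [if_pos h, if_pos h, pow_add]; ring
  · simp [if_neg h]

lemma diagD_sq {R : Type*} [CommRing R] (n : ℕ) (x : R) (hx : x * x = 1) :
    diagD n x * diagD n x = 1 := by
  simp only [diagD, Matrix.diagonal_mul_diagonal]
  ext i j
  by_cases h : i = j
  · subst h
    rw [Matrix.diagonal_apply_eq, Matrix.one_apply_eq, ← mul_pow, hx, one_pow]
  · rw [Matrix.diagonal_apply_ne _ h, Matrix.one_apply_ne h]

lemma zhangLiu_pow {R : Type*} [CommRing R] (n : ℕ) (y x : R) (hx : x * x = 1) (k : ℕ) :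
    zhangLiu n y x ^ k = diagD n x * pascal1 n ((k : R) * y) * diagD n x := by
  induction k with
  | zero =>
    simp only [pow_zero, Nat.cast_zero, zero_mul, pascal1_zero, mul_one]
    exact (diagD_sq n x hx).symm
  | succ k ih =>
    rw [pow_succ, ih, zhangLiu_eq]
    calc diagD n x * pascal1 n ((k:R)*y) * diagD n x * (diagD n x * pascal1 n y * diagD n x)
        = diagD n x * pascal1 n ((k:R)*y) * (diagD n x * diagD n x) * pascal1 n y * diagD n x := by
          simp only [Matrix.mul_assoc]
      _ = diagD n x * (pascal1 n ((k:R)*y) * pascal1 n y) * diagD n x := by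
          rw [diagD_sq n x hx]; simp only [Matrix.mul_one, Matrix.mul_assoc]
      _ = diagD n x * pascal1 n (((k:ℕ)+1 : R) * y) * diagD n x := by
          rw [pascal1_mul]; ring_nf
    push_cast
    ring_nf

theorem zhangLiu_order_char_p {F : Type*} [Field F] (q : ℕ) (hq : q.Prime) [CharP F q]
    (n : ℕ) (hn : 2 ≤ n) (y : F) (hy : y ≠ 0) (x : F) (hx : x = 1 ∨ x = -1) :
    zhangLiu n y x ^ q = 1 ∧ ∀ k : ℕ, 1 ≤ k → k < q → zhangLiu n y x ^ k ≠ 1 := by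
  have hxx : x * x = 1 := by rcases hx with h | h <;> subst h <;> ring
  constructor
  · rw [zhangLiu_pow n y x hxx, CharP.cast_eq_zero F q, zero_mul, pascal1_zero, mul_one,
      diagD_sq n x hxx]
  · intro k hk1 hkq h
    rw [zhangLiu_pow n y x hxx] at h
    have hk0 : (k : F) ≠ 0 := by
      rw [Ne, CharP.cast_eq_zero_iff F q]
      intro hdvd
      exact absurd (Nat.le_of_dvd (by omega) hdvd) (by omega)
    set i0 : Fin n := ⟨0, by omega⟩ with hi0
    set j0 : Fin n := ⟨1, by omega⟩ with hj0
    have h01 := congr_fun (congr_fun h i0) j0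
    have hij : i0 ≤ j0 := by rw [hi0, hj0, Fin.mk_le_mk]; omega
    have hne : i0 ≠ j0 := by rw [hi0, hj0]; intro hc; simpa using congrArg Fin.val hc
    simp only [diagD, pascal1, Matrix.mul_diagonal, Matrix.diagonal_mul, Matrix.of_apply,
      if_pos hij, Matrix.one_apply_ne hne, hi0, hj0] at h01
    simp only [pow_zero, pow_one, one_mul, Nat.sub_zero, Nat.choose_zero_right,
      Nat.cast_one, mul_one] at h01
    have hx0 : x ≠ 0 := by rcases hx with hx | hx <;> subst hx <;> simp
    exact (mul_ne_zero (mul_ne_zero hk0 hy) hx0) h01
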